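/- Let R be a ring and s, t central elements of R. If the ring L_{(s,t)}(R) is a CN ring (with respect to its own center and its nilpotent elements), then R is a CN ring. -/
import Mathlib


/-- An element of a ring has a *CN-decomposition* if it is a sum of a central
element and a nilpotent element. -/
def HasCNDecomp {R : Type*} [Ring R] (a : R) : Prop :=
  ∃ c n : R, c ∈ Set.center R ∧ IsNilpotent n ∧ a = c + n

/-- A ring is a *CN ring* if every element has a CN-decomposition. -/
def IsCNRing (R : Type*) [Ring R] : Prop := ∀ a : R, HasCNDecomp a

/-- `L_{(s,t)}(R)`: the subring of `M₃(R)` of matrices of the form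
`[[a, 0, 0], [s*c, d, t*e], [0, 0, f]]`, for central elements `s, t` of `R`. -/
def Lst {R : Type*} [Ring R] (s t : R) (hs : s ∈ Set.center R) (ht : t ∈ Set.center R) :
    Subring (Matrix (Fin 3) (Fin 3) R) where
  carrier := {A | A 0 1 = 0 ∧ A 0 2 = 0 ∧ A 2 0 = 0 ∧ A 2 1 = 0 ∧
    (∃ c, A 1 0 = s * c) ∧ (∃ e, A 1 2 = t * e)}
  zero_mem' := ⟨rfl, rfl, rfl, rfl, ⟨0, by simp⟩, ⟨0, by simp⟩⟩
  one_mem' := by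
    refine ⟨?_, ?_, ?_, ?_, ⟨0, ?_⟩, ⟨0, ?_⟩⟩ <;> simp [Matrix.one_apply]
  add_mem' := by
    rintro A B ⟨hA1, hA2, hA3, hA4, ⟨c, hc⟩, ⟨e, he⟩⟩ ⟨hB1, hB2, hB3, hB4, ⟨c', hc'⟩, ⟨e', he'⟩⟩
    refine ⟨?_, ?_, ?_, ?_, ⟨c + c', ?_⟩, ⟨e + e', ?_⟩⟩ <;>
      simp [Matrix.add_apply, hA1, hA2, hA3, hA4, hB1, hB2, hB3, hB4, hc, hc', he, he', mul_add]
  neg_mem' := by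
    rintro A ⟨hA1, hA2, hA3, hA4, ⟨c, hc⟩, ⟨e, he⟩⟩
    refine ⟨?_, ?_, ?_, ?_, ⟨-c, ?_⟩, ⟨-e, ?_⟩⟩ <;>
      simp [Matrix.neg_apply, hA1, hA2, hA3, hA4, hc, he]
  mul_mem' := by
    rintro A B ⟨hA1, hA2, hA3, hA4, ⟨c, hc⟩, ⟨e, he⟩⟩ ⟨hB1, hB2, hB3, hB4, ⟨c', hc'⟩, ⟨e', he'⟩⟩
    refine ⟨?_, ?_, ?_, ?_, ⟨c * B 0 0 + A 1 1 * c', ?_⟩, ⟨A 1 1 * e' + e * B 2 2, ?_⟩⟩ <;>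
        rw [Matrix.mul_apply, Fin.sum_univ_three]
    · rw [hA1, hA2, hB1]; simp
    · rw [hA1, hA2, hB2]; simp
    · rw [hA3, hA4, hB3]; simp
    · rw [hA3, hA4, hB4]; simp
    · have h1 : A 1 1 * (s * c') = s * (A 1 1 * c') := by
        rw [← mul_assoc, ← hs.comm, mul_assoc]
      rw [hc, hc', hB3, mul_zero, add_zero, h1, mul_add, mul_assoc]
    · have h1 : A 1 1 * (t * e') = t * (A 1 1 * e') := by
        rw [← mul_assoc, ← ht.comm, mul_assoc]
      rw [he, he', hB2, mul_zero, zero_add, h1, mul_add, mul_assoc]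

theorem pow_entry_aux {R : Type*} [Ring R] (M : Matrix (Fin 3) (Fin 3) R)
    (h1 : M 0 1 = 0) (h2 : M 0 2 = 0) : ∀ k, (M ^ k) 0 0 = (M 0 0) ^ k := by
  intro k
  induction k with
  | zero => simp [Matrix.one_apply]
  | succ n ih =>
    rw [pow_succ', pow_succ', Matrix.mul_apply, Fin.sum_univ_three, h1, h2, ih]
    simp

/-- If `L_{(s,t)}(R)` is a CN ring, then `R` is a CN ring. -/
theorem isCNRing_of_Lst {R : Type*} [Ring R] (s t : R)
    (hs : s ∈ Set.center R) (ht : t ∈ Set.center R)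
    (h : IsCNRing (Lst s t hs ht)) : IsCNRing R := by
  intro a
  have hAmem : (!![a,0,0;0,a,0;0,0,a] : Matrix (Fin 3) (Fin 3) R) ∈ Lst s t hs ht := by
    refine ⟨?_, ?_, ?_, ?_, ⟨0, ?_⟩, ⟨0, ?_⟩⟩ <;> simp [Matrix.vecHead, Matrix.vecTail]
  obtain ⟨C, N, hC, ⟨k, hNk⟩, hsum⟩ := h ⟨_, hAmem⟩
  -- structural facts about C and N
  obtain ⟨hN1, hN2, -, -, -, -⟩ := N.2
  refine ⟨(C : Matrix (Fin 3) (Fin 3) R) 0 0, (N : Matrix (Fin 3) (Fin 3) R) 0 0, ?_, ?_, ?_⟩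
  · rw [Semigroup.mem_center_iff]
    intro r
    have hErmem : (!![r,0,0;0,0,0;0,0,0] : Matrix (Fin 3) (Fin 3) R) ∈ Lst s t hs ht := by
      refine ⟨?_, ?_, ?_, ?_, ⟨0, ?_⟩, ⟨0, ?_⟩⟩ <;> simp [Matrix.vecHead, Matrix.vecTail]
    have h0 := hC.comm ⟨_, hErmem⟩
    have hv := congrArg Subtype.val h0
    rw [Subring.coe_mul, Subring.coe_mul] at hv
    have h00 := congrFun (congrFun hv 0) 0
    rw [Matrix.mul_apply, Matrix.mul_apply, Fin.sum_univ_three, Fin.sum_univ_three] at h00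
    simpa [Matrix.vecHead, Matrix.vecTail] using h00.symm
  · refine ⟨k, ?_⟩
    have h1 := congrArg Subtype.val hNk
    simp only [SubmonoidClass.coe_pow, ZeroMemClass.coe_zero] at h1
    have h2 := congrFun (congrFun h1 0) 0
    simpa [pow_entry_aux _ hN1 hN2 k] using h2
  · have h3 := congrFun (congrFun (congrArg Subtype.val hsum) 0) 0
    simpa using h3
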